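/- Given a word U which is either empty or a valid RVT code word, the set of RVT code words W with L(W) = U is exactly: {R·U} ∪ {V T^{τ−1} followed by the suffix of U after its first τ symbols, prefixed appropriately : 1 ≤ τ ≤ (length of the initial run of R's in U)}, where replacing an initial block R^τ of U by V T^{τ−1} and prepending R yields W. In particular, if U begins with exactly ρ R's followed by a non-R symbol (or ends), there are exactly ρ + 1 words W with L(W) = U. -/

import Mathlib

/-- The three symbols of an RVT code word. -/
inductive RVT : Type
  | R | V | T
deriving DecidableEq, Repr

/-- Replace a leading run of `T`'s by `R`'s. -/
def deT : List RVT → List RVT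
  | RVT.T :: xs => RVT.R :: deT xs
  | xs => xs

/-- If the word begins with `V`, replace that `V` and the immediately
following `T`'s by `R`'s. -/
def reg : List RVT → List RVT
  | RVT.V :: xs => RVT.R :: deT xs
  | xs => xs

/-- The lifted word `L(W)`: remove the first symbol (an `R`), then replace a
leading maximal critical block `V Tᵗ` by `R^(t+1)`. -/
def lift (w : List RVT) : List RVT := reg w.tail

/-- Length of the leading run of `T`'s. -/
def countT : List RVT → ℕ
  | RVT.T :: xs => countT xs + 1
  | _ => 0

/-- Fueled version of the front-end recursion for the Puiseux characteristic
(Theorem PCfront): base case `[1]` on all-`R` words; given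
`PC(L(W)) = [l0; l1, ..., lg]`,
(A) if `W` begins `RR` then `PC(W) = [l0; l1+l0, ..., lg+l0]`;
(B) if `W` begins `R V T^t R` or `W = R V T^t` then
`PC(W) = [(t+2)l0; (t+3)l0, l1+l0, ..., lg+l0]`;
(C) if `W` begins `R V T^t V` then `PC(W) = [l1; l1+l0, ..., lg+l0]`. -/
def PCf : ℕ → List RVT → List ℕ
  | 0, _ => [1]
  | _ + 1, [] => [1]
  | fuel + 1, w@(_ :: rest) =>
    if w.all (· = RVT.R) then [1]
    else
      let p := PCf fuel (lift w)
      let l0 := p.headD 1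
      let tl := p.tail
      match rest with
      | RVT.V :: xs =>
        match xs.drop (countT xs) with
        | RVT.V :: _ => tl.headD 1 :: tl.map (· + l0)                                -- case (C)
        | _ => ((countT xs + 2) * l0) :: ((countT xs + 3) * l0) :: tl.map (· + l0)   -- case (B)
      | _ => l0 :: tl.map (· + l0)                                                   -- case (A)

/-- The Puiseux characteristic `PC(W)` computed by the front-end recursion. -/
def PC (w : List RVT) : List ℕ := PCf w.length w

/-- A valid RVT code word: begins with `R`, and `T` occurs only immediately
after a `V` or a `T`. -/
def ValidRVT (w : List RVT) : Prop :=
  w.head? = some RVT.R ∧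
  ∀ i, w[i + 1]? = some RVT.T → (w[i]? = some RVT.V ∨ w[i]? = some RVT.T)

/-- The function `E` on strings, with `E_T[a;b] = [a;a+b]`, `E_V[a;b] = [b;a+b]`,
`E_R = E_T`, and base value `E(empty) = [1;2]`; the leftmost symbol acts last. -/
def Efun : List RVT → ℕ × ℕ
  | [] => (1, 2)
  | RVT.V :: q => ((Efun q).2, (Efun q).1 + (Efun q).2)
  | _ :: q => ((Efun q).1, (Efun q).1 + (Efun q).2)

/-- The Euclidean-type recursion: `Euc(1,2)` is the empty word; for coprime
`a < b`, if `b < 2a` then `Euc(a,b) = V · Euc(b-a,a)`, and if `b > 2a` then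
`Euc(a,b) = T · Euc(a,b-a)`. -/
def Euc (a b : ℕ) : List RVT :=
  if a = 1 ∧ b = 2 then []
  else if _h1 : 0 < a ∧ a < b ∧ b < 2 * a then RVT.V :: Euc (b - a) a
  else if _h2 : 0 < a ∧ a < b ∧ 2 * a < b then RVT.T :: Euc a (b - a)
  else []
termination_by a + b
decreasing_by all_goals omega

namespace S13
@[simp] lemma deT_nil : deT [] = [] := rfl
@[simp] lemma deT_T (xs) : deT (RVT.T :: xs) = RVT.R :: deT xs := rfl
@[simp] lemma deT_R (xs) : deT (RVT.R :: xs) = RVT.R :: xs := rfl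
@[simp] lemma deT_V (xs) : deT (RVT.V :: xs) = RVT.V :: xs := rfl
@[simp] lemma countT_nil : countT [] = 0 := rfl
@[simp] lemma countT_T (xs) : countT (RVT.T :: xs) = countT xs + 1 := rfl
@[simp] lemma countT_R (xs) : countT (RVT.R :: xs) = 0 := rfl
@[simp] lemma countT_V (xs) : countT (RVT.V :: xs) = 0 := rfl
@[simp] lemma reg_nil : reg [] = [] := rfl
@[simp] lemma reg_R (xs) : reg (RVT.R :: xs) = RVT.R :: xs := rfl
@[simp] lemma reg_V (xs) : reg (RVT.V :: xs) = RVT.R :: deT xs := rfl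
@[simp] lemma reg_T (xs) : reg (RVT.T :: xs) = RVT.T :: xs := rfl

lemma deT_replicate_append (n : ℕ) (s : List RVT) (h : s.head? ≠ some RVT.T) :
    deT (List.replicate n RVT.T ++ s) = List.replicate n RVT.R ++ s := by
  induction n with
  | zero => simp; cases s with
    | nil => rfl
    | cons a t => cases a <;> simp_all
  | succ n ih => simp [List.replicate_succ, ih]

lemma countT_replicate_append (n : ℕ) (s : List RVT) (h : s.head? ≠ some RVT.T) :
    countT (List.replicate n RVT.T ++ s) = n := by
  induction n with
  | zero => simp; cases s with
    | nil => rfl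
    | cons a t => cases a <;> simp_all
  | succ n ih => simp [List.replicate_succ, ih]

lemma countT_spec (xs : List RVT) :
    xs = List.replicate (countT xs) RVT.T ++ xs.drop (countT xs) ∧
    (xs.drop (countT xs)).head? ≠ some RVT.T := by
  induction xs with
  | nil => simp
  | cons a t ih =>
    cases a
    · simp
    · simp
    · refine ⟨?_, ?_⟩
      · simp only [countT_T, List.replicate_succ, List.cons_append, List.drop_succ_cons]
        exact congrArg _ ih.1
      · simpa using ih.2

def Rel (a b : RVT) : Prop := b = RVT.T → a ≠ RVT.R

@[simp] lemma relV (b) : Rel RVT.V b := fun _ => by decide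
@[simp] lemma relT (b) : Rel RVT.T b := fun _ => by decide
end S13

namespace S13
lemma ne_R_iff (a : RVT) : a ≠ RVT.R ↔ a = RVT.V ∨ a = RVT.T := by cases a <;> simp

lemma valid_iff (w : List RVT) :
    ValidRVT w ↔ w.head? = some RVT.R ∧ w.Chain' Rel := by
  unfold ValidRVT
  refine and_congr_right fun _ => ?_
  rw [List.Chain', List.isChain_iff_getElem]
  constructor
  · intro h i hi
    intro hT
    rw [ne_R_iff]
    have h1 : w[i + 1]? = some RVT.T := by
      rw [List.getElem?_eq_getElem (by omega)]
      rw [hT]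
    have := h i h1
    rw [List.getElem?_eq_getElem (by omega)] at this
    simpa using this
  · intro h i hT
    have hi : i + 1 < w.length := by
      by_contra hc
      rw [List.getElem?_eq_none (by omega)] at hT
      simp at hT
    rw [List.getElem?_eq_getElem hi] at hT
    have := h i (by omega)
    have h2 := this (by simpa using hT)
    rw [ne_R_iff] at h2
    rw [List.getElem?_eq_getElem (by omega)]
    rcases h2 with h2 | h2 <;> [left; right] <;> simp [h2]

lemma head?_dropWhile {α : Type*} (p : α → Bool) (l : List α) (a : α)
    (h : (l.dropWhile p).head? = some a) : ¬ p a := by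
  induction l with
  | nil => simp at h
  | cons b t ih =>
    rw [List.dropWhile_cons] at h
    split at h
    · exact ih h
    · simp at h; subst h; assumption

/-- decomposition of a valid (or empty) word -/
lemma decomp (U : List RVT) (hU : U = [] ∨ ValidRVT U) :
    U = List.replicate (U.takeWhile (· = RVT.R)).length RVT.R ++
        U.dropWhile (· = RVT.R) ∧
    (U.dropWhile (· = RVT.R)).head? ≠ some RVT.R ∧
    (U.dropWhile (· = RVT.R)).head? ≠ some RVT.T := by
  have htw : U.takeWhile (· = RVT.R) = List.replicate (U.takeWhile (· = RVT.R)).length RVT.R := by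
    rw [List.eq_replicate_iff]
    exact ⟨rfl, fun b hb => by simpa using List.mem_takeWhile_imp hb⟩
  have hsplit : U = List.replicate (U.takeWhile (· = RVT.R)).length RVT.R ++
      U.dropWhile (· = RVT.R) := by
    conv_lhs => rw [← List.takeWhile_append_dropWhile (p := (· = RVT.R)) (l := U)]
    rw [← htw]
  refine ⟨hsplit, ?_, ?_⟩
  · intro h
    have := head?_dropWhile _ _ _ h
    simp at this
  · intro h
    rcases hU with rfl | hU
    · simp at h
    rw [valid_iff] at hU
    obtain ⟨hhead, hchain⟩ := hU
    have hUeq : U = U.takeWhile (· = RVT.R) ++ U.dropWhile (· = RVT.R) :=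
      (List.takeWhile_append_dropWhile).symm
    rcases hLc : U.takeWhile (· = RVT.R) with _ | ⟨a, t⟩
    · rw [hUeq, hLc, List.nil_append, h] at hhead; simp at hhead
    · rw [hUeq, hLc, List.Chain', List.isChain_append] at hchain
      have hlast := hchain.2.2 ((a :: t).getLast (by simp))
        (List.getLast?_eq_getLast_of_ne_nil (by simp)) RVT.T h
      have hmem : (a :: t).getLast (by simp) ∈ U.takeWhile (· = RVT.R) := by
        rw [hLc]; exact List.getLast_mem _
      have hr := List.mem_takeWhile_imp hmem
      simp at hr
      exact hlast rfl hr
end S13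

namespace S13
@[simp] lemma rel_toR (a : RVT) : Rel a RVT.R := fun h => nomatch h
@[simp] lemma rel_toV (a : RVT) : Rel a RVT.V := fun h => nomatch h
end S13

namespace S13
lemma drop_rep_app {α : Type*} (n : ℕ) (a : α) (l : List α) (τ : ℕ) (h : τ ≤ n) :
    List.drop τ (List.replicate n a ++ l) = List.replicate (n - τ) a ++ l := by
  rw [List.drop_append, List.drop_replicate, List.length_replicate,
    Nat.sub_eq_zero_of_le h, List.drop_zero]

lemma drop_rep_app_self {α : Type*} (n : ℕ) (a : α) (l : List α) :
    List.drop n (List.replicate n a ++ l) = l := by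
  rw [drop_rep_app n a l n le_rfl, Nat.sub_self]; rfl
end S13

open S13 in
/-- Description of the preimages of a word `U` (empty or valid) under the
lifting operation `L`: they are exactly `R · U` together with, for each
`1 ≤ τ ≤ ρ` (where `ρ` is the length of the initial run of `R`'s in `U`), the
word obtained by replacing the initial block `R^τ` of `U` by `V T^(τ−1)` and
prepending `R`. In particular there are exactly `ρ + 1` such words. -/
theorem statement13 (U : List RVT) (hU : U = [] ∨ ValidRVT U) :
    (∀ W : List RVT, (ValidRVT W ∧ lift W = U) ↔
      (W = RVT.R :: U ∨
        ∃ τ, 1 ≤ τ ∧ τ ≤ (U.takeWhile (· = RVT.R)).length ∧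
          W = RVT.R :: RVT.V :: (List.replicate (τ - 1) RVT.T ++ U.drop τ))) ∧
    Set.ncard {W : List RVT | ValidRVT W ∧ lift W = U}
      = (U.takeWhile (· = RVT.R)).length + 1 := by
  obtain ⟨hUs, hsR, hsT⟩ := decomp U hU
  set ρ := (U.takeWhile (· = RVT.R)).length with hρ
  set s := U.dropWhile (· = RVT.R) with hs
  have hheadT : ∀ k, (List.replicate k RVT.R ++ s).head? ≠ some RVT.T := by
    intro k
    cases k with
    | zero => simpa using hsT
    | succ n => simp [List.replicate_succ]
  have hdrop : ∀ τ, τ ≤ ρ → U.drop τ = List.replicate (ρ - τ) RVT.R ++ s := by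
    intro τ hτ
    conv_lhs => rw [hUs]
    exact drop_rep_app _ _ _ _ hτ
  have hdropT : ∀ τ, τ ≤ ρ → (U.drop τ).head? ≠ some RVT.T := by
    intro τ hτ; rw [hdrop τ hτ]; exact hheadT _
  have hdropU : U.drop ρ = s := by
    conv_lhs => rw [hUs]
    exact drop_rep_app_self _ _ _
  have key : ∀ W : List RVT, (ValidRVT W ∧ lift W = U) ↔
      (W = RVT.R :: U ∨
        ∃ τ, 1 ≤ τ ∧ τ ≤ ρ ∧
          W = RVT.R :: RVT.V :: (List.replicate (τ - 1) RVT.T ++ U.drop τ)) := by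
    intro W
    constructor
    · rintro ⟨hWv, hWl⟩
      have hWh := hWv.1
      cases W with
      | nil => simp at hWh
      | cons a w' =>
        simp at hWh
        subst hWh
        cases w' with
        | nil =>
          left
          simp [lift] at hWl
          rw [← hWl]
        | cons b ys =>
          cases b with
          | R =>
            left
            simp only [lift, List.tail_cons, reg_R] at hWl
            rw [hWl]
          | T =>
            exfalso
            rcases hWv.2 0 (by simp) with h | h <;> simp at h
          | V =>
            right
            set t := countT ys with ht
            obtain ⟨hys, hysT⟩ := countT_spec ys
            have hUe : U = List.replicate (t + 1) RVT.R ++ ys.drop t := by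
              rw [← hWl]
              simp only [lift, List.tail_cons, reg_V]
              conv_lhs => rw [hys, deT_replicate_append _ _ hysT]
              rw [List.replicate_succ]
              simp
              rfl
            have hτρ : t + 1 ≤ ρ := by
              by_contra hc
              push_neg at hc
              have h1 : U.drop ρ = List.replicate (t + 1 - ρ) RVT.R ++ ys.drop t := by
                rw [hUe]
                exact drop_rep_app _ _ _ _ (by omega)
              rw [hdropU] at h1
              have : s.head? = some RVT.R := by
                rw [h1]
                have : t + 1 - ρ = (t - ρ) + 1 := by omega
                rw [this, List.replicate_succ]
                simp
              exact hsR this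
            refine ⟨t + 1, by omega, hτρ, ?_⟩
            have hdt : U.drop (t + 1) = ys.drop t := by
              rw [hUe]
              exact drop_rep_app_self _ _ _
            rw [hdt, Nat.add_sub_cancel, ← hys]
    · have hUhead : U = [] ∨ U.head? = some RVT.R := by
        rcases hU with rfl | hU
        · exact Or.inl rfl
        · exact Or.inr hU.1
      rintro (rfl | ⟨τ, hτ1, hτρ, rfl⟩)
      · constructor
        · rw [valid_iff]
          refine ⟨rfl, ?_⟩
          rw [List.Chain', List.isChain_cons]
          constructor
          · intro y hy
            rcases hUhead with rfl | hh
            · simp at hy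
            · rw [hh] at hy
              cases y
              · exact rel_toR _
              · exact rel_toV _
              · exact absurd hy (by simp)
          · rcases hU with rfl | hU
            · simp
            · exact ((valid_iff U).1 hU).2
        · rcases hUhead with rfl | hh
          · rfl
          · cases U with
            | nil => rfl
            | cons a u => simp at hh; subst hh; rfl
      · obtain ⟨k, rfl⟩ : ∃ k, τ = k + 1 := ⟨τ - 1, by omega⟩
        obtain ⟨m, hm⟩ : ∃ m, ρ = k + 1 + m := ⟨ρ - (k + 1), by omega⟩
        have hUne : U ≠ [] := by
          intro h
          rw [h] at hρ
          simp [hρ] at hm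
          omega
        have hUv : ValidRVT U := hU.resolve_left hUne
        constructor
        · rw [valid_iff]
          refine ⟨rfl, ?_⟩
          rw [List.Chain', List.isChain_cons_cons, List.isChain_cons]
          refine ⟨rel_toV _, fun y _ => relV y, ?_⟩
          rw [List.isChain_append]
          refine ⟨List.isChain_replicate_of_rel _ (relT _), ?_, ?_⟩
          · exact List.IsChain.suffix ((valid_iff U).1 hUv).2 (List.drop_suffix _ _)
          · intro x hx y hy
            have hxT : x = RVT.T := List.eq_of_mem_replicate (List.mem_of_mem_getLast? hx)
            rw [hxT]; simp
        · show RVT.R :: deT (List.replicate (k + 1 - 1) RVT.T ++ U.drop (k + 1)) = U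
          rw [Nat.add_sub_cancel,
            deT_replicate_append _ _ (hdropT (k + 1) hτρ), hdrop (k + 1) hτρ]
          conv_rhs => rw [hUs]
          rw [show ρ - (k + 1) = m from by omega, hm]
          rw [show k + 1 + m = (k + m) + 1 from by omega, List.replicate_succ]
          simp only [List.cons_append, List.cons.injEq, true_and]
          rw [List.replicate_add, List.append_assoc]
  refine ⟨key, ?_⟩
  classical
  have hset : {W : List RVT | ValidRVT W ∧ lift W = U} =
      ↑(insert (RVT.R :: U)
        ((Finset.Icc 1 ρ).image
          (fun τ => RVT.R :: RVT.V :: (List.replicate (τ - 1) RVT.T ++ U.drop τ)))) := by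
    ext W
    rw [Set.mem_setOf_eq, key W]
    simp only [Finset.coe_insert, Set.mem_insert_iff, Finset.coe_image, Set.mem_image,
      Finset.mem_coe, Finset.mem_Icc]
    constructor
    · rintro (rfl | ⟨τ, h1, h2, rfl⟩)
      · exact Or.inl rfl
      · exact Or.inr ⟨τ, ⟨h1, h2⟩, rfl⟩
    · rintro (rfl | ⟨τ, ⟨h1, h2⟩, rfl⟩)
      · exact Or.inl rfl
      · exact Or.inr ⟨τ, h1, h2, rfl⟩
  rw [hset, Set.ncard_coe_finset]
  rw [Finset.card_insert_of_notMem, Finset.card_image_of_injOn, Nat.card_Icc]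
  · omega
  · intro a ha b hb hab
    simp only [Finset.coe_Icc, Set.mem_Icc] at ha hb
    simp only [List.cons.injEq, true_and] at hab
    have h1 := countT_replicate_append (a - 1) (U.drop a) (hdropT a ha.2)
    have h2 := countT_replicate_append (b - 1) (U.drop b) (hdropT b hb.2)
    rw [hab, h2] at h1
    omega
  · intro hmem
    simp only [Finset.mem_image, Finset.mem_Icc] at hmem
    obtain ⟨τ, ⟨h1, h2⟩, heq⟩ := hmem
    have hU' : RVT.V :: (List.replicate (τ - 1) RVT.T ++ List.drop τ U) = U := by
      have := heq
      simpa only [List.cons.injEq, true_and] using this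
    have hh : U.head? = some RVT.V := by rw [← hU']; rfl
    rw [hUs] at hh
    have : ρ ≥ 1 := le_trans h1 h2
    obtain ⟨n, hn⟩ : ∃ n, ρ = n + 1 := ⟨ρ - 1, by omega⟩
    rw [hn, List.replicate_succ] at hh
    simp at hh
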